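/- Fix ε ∈ (0,1) and functions a, b : ℕ → ℕ with a(n) = o(log n) and b(n) = o(n^{1−ε}). Then for all sufficiently large n, there is no (a(n), b(n))-BAPO that solves Majority on all inputs of length n. -/

import Mathlib

open Finset Filter Asymptotics

/-- An `(a, b)`-BAPO (bounded attention prefix oracle): a prefix oracle `f` outputting
`a` bits, a binary attention function `g`, and a suffix oracle `h` that receives the
prefix-oracle output, an attended set of at most `b` (token, 1-based index) pairs from
the prefix, the suffix, and the split index. -/
structure BAPO (Sigma : Type) (Out : Type) (a b : ℕ) where
  f : List Sigma → (Fin a → Bool)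
  g : List Sigma → ℕ → Sigma → ℕ → Bool
  h : (Fin a → Bool) → Finset (Sigma × ℕ) → List Sigma → ℕ → Out

namespace BAPO

variable {Sigma Out : Type} {a b : ℕ}

/-- The set `𝔾 = {(xᵢ, i) : 1 ≤ i ≤ k, g(suffix, k, xᵢ, i) = 1}` of attended
candidates for a given prefix and suffix. -/
noncomputable def cands (M : BAPO Sigma Out a b) (pre suf : List Sigma) :
    Finset (Sigma × ℕ) :=
  letI := Classical.decEq Sigma
  (Finset.univ.filter fun i : Fin pre.length =>
      M.g suf pre.length (pre.get i) ((i : ℕ) + 1) = true).image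
    fun i => (pre.get i, (i : ℕ) + 1)

/-- The BAPO outputs `y` on input `x`: for every split index `k < |x|` and every
attended set `G ⊆ 𝔾` with `|G| = min b |𝔾|`, the suffix oracle outputs `y`. -/
def SolvesOn (M : BAPO Sigma Out a b) (x : List Sigma) (y : Out) : Prop :=
  ∀ k, k < x.length →
    ∀ G : Finset (Sigma × ℕ), G ⊆ M.cands (x.take k) (x.drop k) →
      G.card = min b (M.cands (x.take k) (x.drop k)).card →
      M.h (M.f (x.take k)) G (x.drop k) k = y

/-- The BAPO outputs a *correct* answer (one satisfying `good`) on input `x`: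
for every split index `k < |x|` and every attended set `G ⊆ 𝔾` with
`|G| = min b |𝔾|`, the suffix oracle's output satisfies `good`. -/
def SolvesOnP (M : BAPO Sigma Out a b) (x : List Sigma) (good : Out → Prop) : Prop :=
  ∀ k, k < x.length →
    ∀ G : Finset (Sigma × ℕ), G ⊆ M.cands (x.take k) (x.drop k) →
      G.card = min b (M.cands (x.take k) (x.drop k)).card →
      good (M.h (M.f (x.take k)) G (x.drop k) k)

end BAPO

lemma count_ofFn {k : ℕ} (f : Fin k → Bool) (y : Bool) :
    (List.ofFn f).count y = #(Finset.univ.filter fun i => f i = y) := by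
  induction k with
  | zero => simp
  | succ n ih =>
      rw [List.ofFn_succ, List.count_cons, ih (fun i => f i.succ),
        Fin.card_filter_univ_succ' (fun i => f i = y)]
      by_cases h : f 0 = y <;> simp [h, add_comm]

lemma cands_ofFn {A bb k : ℕ} (M : BAPO Bool Bool A bb) (χ : Fin k → Bool) (s : List Bool) :
    M.cands (List.ofFn χ) s =
      (Finset.univ.filter fun p : Fin k => M.g s k (χ p) ((p : ℕ) + 1) = true).image
        (fun p => (χ p, (p : ℕ) + 1)) := by
  unfold BAPO.cands
  ext y
  simp only [Finset.mem_image, Finset.mem_filter, Finset.mem_univ, true_and]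
  constructor
  · rintro ⟨i, hg, rfl⟩
    refine ⟨Fin.cast (List.length_ofFn : (List.ofFn χ).length = k) i, ?_, ?_⟩
    · rw [← List.get_ofFn χ i]
      simpa [List.length_ofFn] using hg
    · simp only [List.get_ofFn]
      rfl
  · rintro ⟨p, hg, rfl⟩
    refine ⟨Fin.cast (List.length_ofFn : (List.ofFn χ).length = k).symm p, ?_, ?_⟩
    · simpa [List.length_ofFn, List.get_ofFn] using hg
    · simp [List.get_ofFn]

namespace MajHard

/-- number of prefixes used -/
def rr (A : ℕ) : ℕ := 2 ^ A + 1
/-- size threshold for "big" attention sets -/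
def Qv (A bb : ℕ) : ℕ := rr A * bb + bb
/-- bound on the size of the core pattern -/
def betav (A bb : ℕ) : ℕ := 3 * rr A * rr A * (bb + 1)
/-- thresholds -/
def tauv (A bb : ℕ) (i : ℕ) : ℕ := betav A bb + i + 1

/-- suffix whose threshold is `t` -/
def sfx (m t : ℕ) : List Bool :=
  List.replicate (m - t) true ++ List.replicate t false

lemma sfx_len {m t : ℕ} (ht : t ≤ m) : (sfx m t).length = m := by
  simp [sfx]; omega

lemma sfx_count_true (m t : ℕ) : (sfx m t).count true = m - t := by
  simp [sfx, List.count_replicate]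

lemma sfx_count_false (m t : ℕ) : (sfx m t).count false = t := by
  simp [sfx, List.count_replicate]

section

variable {A bb : ℕ} (M : BAPO Bool Bool A bb) (k m : ℕ)

/-- positions (0-based, of the prefix) where token `true` is attended -/
def T1 (t : ℕ) : Finset (Fin k) :=
  Finset.univ.filter fun p => M.g (sfx m t) k true ((p : ℕ) + 1) = true

/-- positions where token `false` is attended -/
def T0 (t : ℕ) : Finset (Fin k) :=
  Finset.univ.filter fun p => M.g (sfx m t) k false ((p : ℕ) + 1) = true

/-- positions where some token is attended -/
def UU (t : ℕ) : Finset (Fin k) := T1 M k m t ∪ T0 M k m t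

end

/-- pick `c` elements of `u \ avoid` (or `∅` if impossible) -/
noncomputable def pick {γ : Type} [DecidableEq γ] (c : ℕ) (u avoid : Finset γ) : Finset γ :=
  if h : c ≤ (u \ avoid).card then (Finset.exists_subset_card_eq h).choose else ∅

lemma pick_sub {γ : Type} [DecidableEq γ] (c : ℕ) (u avoid : Finset γ) :
    pick c u avoid ⊆ u \ avoid := by
  unfold pick
  split_ifs with h
  · exact (Finset.exists_subset_card_eq h).choose_spec.1
  · exact Finset.empty_subset _

lemma pick_card {γ : Type} [DecidableEq γ] {c : ℕ} {u avoid : Finset γ}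
    (h : c ≤ (u \ avoid).card) : (pick c u avoid).card = c := by
  unfold pick
  rw [dif_pos h]
  exact (Finset.exists_subset_card_eq h).choose_spec.2

lemma pick_card_le {γ : Type} [DecidableEq γ] (c : ℕ) (u avoid : Finset γ) :
    (pick c u avoid).card ≤ c := by
  unfold pick
  split_ifs with h
  · exact le_of_eq (Finset.exists_subset_card_eq h).choose_spec.2
  · simp

section

variable {A bb : ℕ} (M : BAPO Bool Bool A bb) (k m : ℕ)

/-- accumulated reserved positions -/
noncomputable def acc : ℕ → Finset (Fin k)
  | 0 => ∅
  | i + 1 => acc i ∪ pick bb (UU M k m (tauv A bb i)) (acc i)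

/-- reserved positions for threshold `i` -/
noncomputable def SS (i : ℕ) : Finset (Fin k) :=
  pick bb (UU M k m (tauv A bb i)) (acc M k m i)

lemma acc_succ (i : ℕ) : acc M k m (i + 1) = acc M k m i ∪ SS M k m i := rfl

lemma acc_mono : Monotone (acc M k m) := by
  apply monotone_nat_of_le_succ
  intro i
  rw [acc_succ]
  exact Finset.subset_union_left

lemma SS_sub (i : ℕ) : SS M k m i ⊆ UU M k m (tauv A bb i) \ acc M k m i :=
  pick_sub _ _ _

lemma SS_sub_acc (i : ℕ) : SS M k m i ⊆ acc M k m (i + 1) := by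
  rw [acc_succ]; exact Finset.subset_union_right

lemma acc_card (i : ℕ) : (acc M k m i).card ≤ i * bb := by
  induction i with
  | zero => simp [acc]
  | succ i ih =>
      rw [acc_succ]
      calc (acc M k m i ∪ SS M k m i).card ≤ (acc M k m i).card + (SS M k m i).card :=
            Finset.card_union_le _ _
        _ ≤ i * bb + bb := Nat.add_le_add ih (pick_card_le _ _ _)
        _ = (i + 1) * bb := by ring

lemma SS_card_big {i : ℕ} (hi : i ≤ rr A)
    (h : Qv A bb ≤ (UU M k m (tauv A bb i)).card) : (SS M k m i).card = bb := by
  apply pick_card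
  have h1 : (UU M k m (tauv A bb i)).card - (acc M k m i).card ≤
      ((UU M k m (tauv A bb i)) \ acc M k m i).card := Finset.le_card_sdiff _ _
  have h2 := acc_card M k m i
  have h3 : i * bb ≤ rr A * bb := Nat.mul_le_mul_right _ hi
  unfold Qv at h
  omega

lemma SS_eq_of_mem {i j : ℕ} {p : Fin k} (hpi : p ∈ SS M k m i) (hpj : p ∈ SS M k m j) :
    i = j := by
  rcases Nat.lt_trichotomy i j with h | h | h
  · exfalso
    have h1 : p ∈ acc M k m j := acc_mono M k m h (SS_sub_acc M k m i hpi)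
    exact (Finset.mem_sdiff.mp (SS_sub M k m j hpj)).2 h1
  · exact h
  · exfalso
    have h1 : p ∈ acc M k m i := acc_mono M k m h (SS_sub_acc M k m j hpj)
    exact (Finset.mem_sdiff.mp (SS_sub M k m i hpi)).2 h1

/-- the core pattern -/
noncomputable def piF (p : Fin k) : Bool :=
  decide (∃ i, i < rr A ∧ p ∈ SS M k m i ∧ p ∈ T1 M k m (tauv A bb i))

lemma piF_spec {i : ℕ} (hi : i < rr A) {p : Fin k} (hp : p ∈ SS M k m i) :
    piF M k m p = true ↔ p ∈ T1 M k m (tauv A bb i) := by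
  unfold piF
  rw [decide_eq_true_iff]
  constructor
  · rintro ⟨i', _, hp', hT⟩
    rwa [SS_eq_of_mem M k m hp hp'] 
  · intro hT
    exact ⟨i, hi, hp, hT⟩

lemma g_piF {i : ℕ} (hi : i < rr A) {p : Fin k} (hp : p ∈ SS M k m i) :
    M.g (sfx m (tauv A bb i)) k (piF M k m p) ((p : ℕ) + 1) = true := by
  have hpU : p ∈ UU M k m (tauv A bb i) := (Finset.mem_sdiff.mp (SS_sub M k m i hp)).1
  by_cases hπ : piF M k m p = true
  · rw [hπ]
    have := (piF_spec M k m hi hp).mp hπ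
    simpa [T1] using this
  · rw [Bool.not_eq_true] at hπ
    rw [hπ]
    have hT1 : p ∉ T1 M k m (tauv A bb i) := by
      intro hT
      have := (piF_spec M k m hi hp).mpr hT
      rw [hπ] at this
      exact Bool.false_ne_true this
    have hT0 : p ∈ T0 M k m (tauv A bb i) := by
      rcases Finset.mem_union.mp hpU with h | h
      · exact absurd h hT1
      · exact h
    simpa [T0] using hT0

end

end MajHard

namespace MajHard

section

variable {A bb : ℕ} (M : BAPO Bool Bool A bb) (k m : ℕ)

/-- union of all small attention sets -/
noncomputable def Wall : Finset (Fin k) :=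
  (Finset.range (rr A)).biUnion fun i =>
    if Qv A bb ≤ (UU M k m (tauv A bb i)).card then ∅ else UU M k m (tauv A bb i)

/-- the core positions -/
noncomputable def BB : Finset (Fin k) := acc M k m (rr A) ∪ Wall M k m

lemma UU_sub_BB {i : ℕ} (hi : i < rr A)
    (h : (UU M k m (tauv A bb i)).card < Qv A bb) : UU M k m (tauv A bb i) ⊆ BB M k m := by
  intro p hp
  apply Finset.mem_union_right
  apply Finset.mem_biUnion.mpr
  exact ⟨i, Finset.mem_range.mpr hi, by rw [if_neg (by omega)]; exact hp⟩

lemma SS_sub_BB {i : ℕ} (hi : i < rr A) : SS M k m i ⊆ BB M k m := fun p hp =>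
  Finset.mem_union_left _ (acc_mono M k m hi (SS_sub_acc M k m i hp))

lemma BB_card : (BB M k m).card ≤ betav A bb := by
  have h1 : (acc M k m (rr A)).card ≤ rr A * bb := acc_card M k m (rr A)
  have h2 : (Wall M k m).card ≤ rr A * (Qv A bb) := by
    calc (Wall M k m).card ≤ ∑ i ∈ Finset.range (rr A),
          (if Qv A bb ≤ (UU M k m (tauv A bb i)).card then (∅ : Finset (Fin k))
            else UU M k m (tauv A bb i)).card := Finset.card_biUnion_le
      _ ≤ ∑ _i ∈ Finset.range (rr A), Qv A bb := by
          apply Finset.sum_le_sum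
          intro i _
          split_ifs with h
          · simp
          · omega
      _ = rr A * Qv A bb := by rw [Finset.sum_const, Finset.card_range, smul_eq_mul]
  have h3 : (BB M k m).card ≤ (acc M k m (rr A)).card + (Wall M k m).card :=
    Finset.card_union_le _ _
  have hr : 1 ≤ rr A := Nat.le_add_left _ _
  unfold Qv at h2
  unfold betav
  nlinarith [h1, h2, h3]

/-- the ones of the core pattern -/
noncomputable def Pones : Finset (Fin k) := (BB M k m).filter fun p => piF M k m p = true

/-- number of ones in the core pattern -/
noncomputable def sig : ℕ := (Pones M k m).card

lemma sig_le : sig M k m ≤ betav A bb :=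
  le_trans (Finset.card_le_card (Finset.filter_subset _ _)) (BB_card M k m)

/-- free positions of prefix `c` carrying a one -/
noncomputable def FF (c : ℕ) : Finset (Fin k) :=
  pick (tauv A bb c - sig M k m) (Finset.univ \ BB M k m) ∅

/-- the set of ones of prefix `c` -/
noncomputable def PP (c : ℕ) : Finset (Fin k) := Pones M k m ∪ FF M k m c

/-- prefix `c`, as a function -/
noncomputable def chi (c : ℕ) (p : Fin k) : Bool := decide (p ∈ PP M k m c)

/-- prefix `c`, as a list -/
noncomputable def xs (c : ℕ) : List Bool := List.ofFn (chi M k m c)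

lemma xs_length (c : ℕ) : (xs M k m c).length = k := by
  simp [xs]

lemma FF_sub (c : ℕ) : FF M k m c ⊆ Finset.univ \ BB M k m := by
  have := pick_sub (tauv A bb c - sig M k m) (Finset.univ \ BB M k m) (∅ : Finset (Fin k))
  simpa [FF] using this

lemma chi_core {c : ℕ} {p : Fin k} (hp : p ∈ BB M k m) : chi M k m c p = piF M k m p := by
  have hpF : p ∉ FF M k m c := fun h => (Finset.mem_sdiff.mp (FF_sub M k m c h)).2 hp
  unfold chi PP
  by_cases hπ : piF M k m p = true
  · rw [hπ, decide_eq_true_iff]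
    exact Finset.mem_union_left _ (Finset.mem_filter.mpr ⟨hp, hπ⟩)
  · rw [Bool.not_eq_true] at hπ
    rw [hπ, decide_eq_false_iff_not]
    intro hmem
    rcases Finset.mem_union.mp hmem with h | h
    · rw [(Finset.mem_filter.mp h).2] at hπ; exact Bool.noConfusion hπ
    · exact hpF h

/-- capacity hypothesis: enough free room -/
lemma PP_card {c : ℕ} (hcap : tauv A bb c - sig M k m ≤ (Finset.univ \ BB M k m).card) :
    (PP M k m c).card = tauv A bb c := by
  have hFF : (FF M k m c).card = tauv A bb c - sig M k m := by
    apply pick_card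
    simpa using hcap
  have hdisj : Disjoint (Pones M k m) (FF M k m c) := by
    rw [Finset.disjoint_right]
    intro p hp
    have := (Finset.mem_sdiff.mp (FF_sub M k m c hp)).2
    exact fun hp' => this (Finset.filter_subset _ _ hp')
  rw [PP, Finset.card_union_of_disjoint hdisj, hFF]
  have h1 : sig M k m ≤ betav A bb := sig_le M k m
  have h2 : betav A bb < tauv A bb c := by unfold tauv; omega
  have h3 : sig M k m = (Pones M k m).card := rfl
  omega

lemma xs_count_true {c : ℕ} (hcap : tauv A bb c - sig M k m ≤ (Finset.univ \ BB M k m).card) :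
    (xs M k m c).count true = tauv A bb c := by
  rw [xs, count_ofFn]
  rw [← PP_card M k m hcap]
  congr 1
  ext p
  simp [chi]

lemma xs_count_false {c : ℕ} (hcap : tauv A bb c - sig M k m ≤ (Finset.univ \ BB M k m).card) :
    (xs M k m c).count false = k - tauv A bb c := by
  rw [xs, count_ofFn]
  have : (Finset.univ.filter fun i => chi M k m c i = false) = Finset.univ \ PP M k m c := by
    ext p
    simp [chi]
  rw [this, Finset.card_sdiff_of_subset (Finset.subset_univ _), PP_card M k m hcap, Finset.card_univ,
    Fintype.card_fin]

end

end MajHard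

namespace MajHard

lemma bapo_majority_core (A bb n : ℕ)
    (hineq : 7 * (2 ^ A + 1) ^ 2 * (bb + 1) ≤ n / 2) :
    ¬ ∃ M : BAPO Bool Bool A bb, ∀ x : List Bool, x.length = n →
        M.SolvesOn x (decide (x.count false < x.count true)) := by
  rintro ⟨M, hM⟩
  set m := n / 2 with hm
  set k := n - m with hk
  have h2A : 1 ≤ 2 ^ A := Nat.one_le_two_pow
  have hr2 : 2 ≤ rr A := by unfold rr; omega
  have hineq' : 7 * (rr A * rr A) * (bb + 1) ≤ m := by
    have he : 7 * (2 ^ A + 1) ^ 2 * (bb + 1) = 7 * (rr A * rr A) * (bb + 1) := by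
      unfold rr; ring
    omega
  have hβm : 2 * betav A bb + rr A ≤ m := by
    have h1 : rr A ≤ rr A * rr A * (bb + 1) := by nlinarith
    unfold betav
    nlinarith
  have hm28 : 28 ≤ m := by nlinarith
  have hmk : m ≤ k ∧ k ≤ m + 1 ∧ k + m = n ∧ k < n := by omega
  obtain ⟨hmk1, hmk2, hmk3, hkn⟩ := hmk
  have htau_m : ∀ c, c < rr A → tauv A bb c ≤ m := by
    intro c hc; unfold tauv; omega
  have hcap : ∀ c, c < rr A →
      tauv A bb c - sig M k m ≤ (Finset.univ \ BB M k m).card := by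
    intro c hc
    have h1 : (Finset.univ \ BB M k m).card = k - (BB M k m).card := by
      rw [Finset.card_sdiff_of_subset (Finset.subset_univ _), Finset.card_univ, Fintype.card_fin]
    have h2 := BB_card M k m
    have h3 : tauv A bb c ≤ betav A bb + rr A := by unfold tauv; omega
    omega
  -- pigeonhole on the prefix oracle
  have hpigeon : ∃ i j : Fin (rr A), (i : ℕ) < (j : ℕ) ∧
      M.f (xs M k m i) = M.f (xs M k m j) := by
    obtain ⟨i, j, hne, hfe⟩ := Fintype.exists_ne_map_eq_of_card_lt
      (fun c : Fin (rr A) => M.f (xs M k m (c : ℕ)))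
      (by simp only [Fintype.card_fun, Fintype.card_fin, Fintype.card_bool]; unfold rr; omega)
    rcases Nat.lt_or_ge (i : ℕ) (j : ℕ) with h | h
    · exact ⟨i, j, h, hfe⟩
    · have : (j : ℕ) < (i : ℕ) := by
        rcases Nat.lt_or_ge (j : ℕ) (i : ℕ) with h' | h'
        · exact h'
        · exact absurd (Fin.ext (le_antisymm h' h)) hne
      exact ⟨j, i, this, hfe.symm⟩
  obtain ⟨i, j, hij, hfeq⟩ := hpigeon
  have hi : (i : ℕ) < rr A := i.isLt
  have hj : (j : ℕ) < rr A := j.isLt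
  set ti := tauv A bb (i : ℕ) with hti
  set tj := tauv A bb (j : ℕ) with htj
  have htitj : ti < tj := by
    rw [hti, htj]; unfold tauv; omega
  have htim : ti ≤ m := htau_m _ hi
  have htjm : tj ≤ m := htau_m _ hj
  -- a common attended set
  have hkey : ∃ G : Finset (Bool × ℕ),
      (G ⊆ M.cands (xs M k m i) (sfx m ti) ∧
        G.card = min bb (M.cands (xs M k m i) (sfx m ti)).card) ∧
      (G ⊆ M.cands (xs M k m j) (sfx m ti) ∧
        G.card = min bb (M.cands (xs M k m j) (sfx m ti)).card) := by
    by_cases hbig : Qv A bb ≤ (UU M k m ti).card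
    · -- big case: take the reserved positions
      set G := (SS M k m (i : ℕ)).image (fun p : Fin k => (piF M k m p, (p : ℕ) + 1)) with hG
      have hsub : ∀ c, c < rr A → G ⊆ M.cands (xs M k m c) (sfx m ti) := by
        intro c hc
        rw [xs, cands_ofFn]
        intro y hy
        obtain ⟨p, hp, rfl⟩ := Finset.mem_image.mp hy
        have hpB : p ∈ BB M k m := SS_sub_BB M k m hi hp
        apply Finset.mem_image.mpr
        refine ⟨p, Finset.mem_filter.mpr ⟨Finset.mem_univ _, ?_⟩, ?_⟩
        · rw [chi_core M k m hpB]
          exact g_piF M k m hi hp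
        · rw [chi_core M k m hpB]
      have hGcard : G.card = bb := by
        rw [hG, Finset.card_image_of_injOn]
        · exact SS_card_big M k m (le_of_lt hi) hbig
        · intro p _ q _ hpq
          have : (p : ℕ) + 1 = (q : ℕ) + 1 := congrArg Prod.snd hpq
          exact Fin.ext (by omega)
      have hmin : ∀ c, c < rr A → min bb (M.cands (xs M k m c) (sfx m ti)).card = bb := by
        intro c hc
        apply min_eq_left
        calc bb = G.card := hGcard.symm
          _ ≤ _ := Finset.card_le_card (hsub c hc)
      exact ⟨G, ⟨hsub _ hi, by rw [hGcard, hmin _ hi]⟩, ⟨hsub _ hj, by rw [hGcard, hmin _ hj]⟩⟩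
    · -- small case: the candidate sets coincide
      push_neg at hbig
      have hUB : UU M k m ti ⊆ BB M k m := UU_sub_BB M k m hi hbig
      have hagree : ∀ (c c' : ℕ) (p : Fin k),
          M.g (sfx m ti) k (chi M k m c p) ((p : ℕ) + 1) = true →
          chi M k m c p = chi M k m c' p := by
        intro c c' p hg
        have hpB : p ∈ BB M k m := by
          apply hUB
          cases hchi : chi M k m c p with
          | true =>
              rw [hchi] at hg
              exact Finset.mem_union_left _
                (Finset.mem_filter.mpr ⟨Finset.mem_univ _, hg⟩)
          | false =>
              rw [hchi] at hg
              exact Finset.mem_union_right _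
                (Finset.mem_filter.mpr ⟨Finset.mem_univ _, hg⟩)
        rw [chi_core M k m hpB, chi_core M k m hpB]
      have hcandeq : M.cands (xs M k m i) (sfx m ti) = M.cands (xs M k m j) (sfx m ti) := by
        rw [xs, xs, cands_ofFn, cands_ofFn]
        ext y
        simp only [Finset.mem_image, Finset.mem_filter, Finset.mem_univ, true_and]
        constructor
        · rintro ⟨p, hg, rfl⟩
          have he := hagree (i : ℕ) (j : ℕ) p hg
          exact ⟨p, by rw [← he]; exact hg, by rw [he]⟩
        · rintro ⟨p, hg, rfl⟩
          have he := hagree (j : ℕ) (i : ℕ) p hg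
          exact ⟨p, by rw [← he]; exact hg, by rw [he]⟩
      obtain ⟨G, hGsub, hGcard⟩ := Finset.exists_subset_card_eq
        (min_le_right bb (M.cands (xs M k m i) (sfx m ti)).card)
      exact ⟨G, ⟨hGsub, hGcard⟩, ⟨by rw [← hcandeq]; exact hGsub, by rw [← hcandeq]; exact hGcard⟩⟩
  obtain ⟨G, ⟨hGi, hGci⟩, hGj, hGcj⟩ := hkey
  -- apply the solver to both inputs
  have happly : ∀ c, c < rr A →
      G ⊆ M.cands (xs M k m c) (sfx m ti) →
      G.card = min bb (M.cands (xs M k m c) (sfx m ti)).card →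
      M.h (M.f (xs M k m c)) G (sfx m ti) k =
        decide ((k - tauv A bb c) + ti < tauv A bb c + (m - ti)) := by
    intro c hc hsub hcard
    set X := xs M k m c ++ sfx m ti with hX
    have hXlen : X.length = n := by
      rw [hX, List.length_append, xs_length, sfx_len htim]; omega
    have htake : X.take k = xs M k m c := List.take_left' (xs_length M k m c)
    have hdrop : X.drop k = sfx m ti := List.drop_left' (xs_length M k m c)
    have e := hM X hXlen k (by rw [hXlen]; exact hkn) G
      (by rw [htake, hdrop]; exact hsub) (by rw [htake, hdrop]; exact hcard)
    rw [htake, hdrop] at e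
    have hcf : List.count false X = (k - tauv A bb c) + ti := by
      rw [hX, List.count_append, xs_count_false M k m (hcap c hc), sfx_count_false]
    have hct : List.count true X = tauv A bb c + (m - ti) := by
      rw [hX, List.count_append, xs_count_true M k m (hcap c hc), sfx_count_true]
    rw [e, hcf, hct]
  have e1 := happly (i : ℕ) hi hGi hGci
  have e2 := happly (j : ℕ) hj hGj hGcj
  rw [hfeq] at e1
  rw [e1] at e2
  have hd1 : decide ((k - ti) + ti < ti + (m - ti)) = false := by
    simp only [decide_eq_false_iff_not]
    omega
  have hd2 : decide ((k - tj) + ti < tj + (m - ti)) = true := by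
    simp only [decide_eq_true_eq]
    omega
  rw [hd1, hd2] at e2
  exact Bool.noConfusion e2

end MajHard

/-- **Majority is BAPO-hard.** Fix `ε ∈ (0,1)` and functions `a, b : ℕ → ℕ` with
`a(n) = o(log n)` and `b(n) = o(n^{1-ε})`. Then for all sufficiently large `n`,
there is no `(a(n), b(n))`-BAPO solving `Majority` (does a bit-string contain
strictly more ones than zeros?) on all inputs of length `n`. -/
theorem majority_hard (ε : ℝ) (hε0 : 0 < ε) (hε1 : ε < 1) (a b : ℕ → ℕ)
    (ha : (fun n : ℕ => (a n : ℝ)) =o[atTop] fun n : ℕ => Real.log n)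
    (hb : (fun n : ℕ => (b n : ℝ)) =o[atTop] fun n : ℕ => (n : ℝ) ^ (1 - ε)) :
    ∀ᶠ n in atTop,
      ¬ ∃ M : BAPO Bool Bool (a n) (b n),
        ∀ x : List Bool, x.length = n →
          M.SolvesOn x (decide (x.count false < x.count true)) := by
  have hlog2 : 0 < Real.log 2 := Real.log_pos one_lt_two
  have h8 : 0 < ε / (8 * Real.log 2) := by positivity
  have hA := ha.def h8
  have hB := hb.def one_pos
  have hT : Filter.Tendsto (fun n : ℕ => (n : ℝ) ^ (3 * ε / 4)) atTop atTop :=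
    (tendsto_rpow_atTop (by positivity)).comp tendsto_natCast_atTop_atTop
  have hev : ∀ᶠ n : ℕ in atTop, 7 * (2 ^ a n + 1) ^ 2 * (b n + 1) ≤ n / 2 := by
    filter_upwards [hA, hB, hT.eventually_ge_atTop 224, eventually_ge_atTop 2]
      with n h1 h2 h3 hn2
    have hn0 : (0 : ℝ) < n := by
      have : (2 : ℝ) ≤ (n : ℝ) := by exact_mod_cast hn2
      linarith
    have hn1 : (1 : ℝ) ≤ n := by
      have : 1 ≤ n := by omega
      exact_mod_cast this
    have hlogn : 0 ≤ Real.log n := Real.log_nonneg hn1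
    rw [Real.norm_of_nonneg (by positivity), Real.norm_of_nonneg hlogn] at h1
    rw [Real.norm_of_nonneg (by positivity), Real.norm_of_nonneg (by positivity),
      one_mul] at h2
    set X := (n : ℝ) ^ (ε / 8) with hX
    set Y := (n : ℝ) ^ (1 - ε) with hY
    set Z := (n : ℝ) ^ (3 * ε / 4) with hZ
    have hX1 : 1 ≤ X := Real.one_le_rpow hn1 (by positivity)
    have hY1 : 1 ≤ Y := Real.one_le_rpow hn1 (by linarith)
    have hZ0 : 0 < Z := by rw [hZ]; positivity
    -- 2 ^ (a n) ≤ X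
    have hpow : ((2 : ℝ)) ^ (a n) ≤ X := by
      have e1 : ((2 : ℝ)) ^ (a n) = Real.exp ((a n : ℝ) * Real.log 2) := by
        rw [← Real.rpow_natCast 2 (a n), Real.rpow_def_of_pos (by norm_num), mul_comm]
      have e2 : X = Real.exp ((ε / 8) * Real.log n) := by
        rw [hX, Real.rpow_def_of_pos hn0, mul_comm]
      rw [e1, e2]
      apply Real.exp_le_exp.mpr
      have : (a n : ℝ) * Real.log 2 ≤ (ε / (8 * Real.log 2) * Real.log n) * Real.log 2 :=
        mul_le_mul_of_nonneg_right h1 (le_of_lt hlog2)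
      calc (a n : ℝ) * Real.log 2 ≤ (ε / (8 * Real.log 2) * Real.log n) * Real.log 2 := this
        _ = (ε / 8) * Real.log n := by field_simp
    -- the product identity
    have hXYZ : X * X * Y * Z = n := by
      rw [hX, hY, hZ, ← Real.rpow_add hn0, ← Real.rpow_add hn0, ← Real.rpow_add hn0]
      have : ε / 8 + ε / 8 + (1 - ε) + 3 * ε / 4 = 1 := by ring
      rw [this, Real.rpow_one]
    have hstep : 7 * ((2 : ℝ) ^ (a n) + 1) ^ 2 * ((b n : ℝ) + 1) ≤ 7 * (2 * X) ^ 2 * (2 * Y) := by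
      have hp1 : ((2 : ℝ) ^ (a n) + 1) ≤ 2 * X := by
        have : (1 : ℝ) ≤ X := hX1
        linarith
      have hp0 : (0 : ℝ) ≤ (2 : ℝ) ^ (a n) + 1 := by positivity
      have hq1 : ((b n : ℝ) + 1) ≤ 2 * Y := by linarith
      have hq0 : (0 : ℝ) ≤ (b n : ℝ) + 1 := by positivity
      have hsq : ((2 : ℝ) ^ (a n) + 1) ^ 2 ≤ (2 * X) ^ 2 := by nlinarith
      nlinarith
    have hfin : 7 * ((2 : ℝ) ^ (a n) + 1) ^ 2 * ((b n : ℝ) + 1) ≤ (n : ℝ) / 4 := by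
      have h224 : 224 * (X * X * Y) ≤ Z * (X * X * Y) := by
        apply mul_le_mul_of_nonneg_right h3
        positivity
      have : Z * (X * X * Y) = (n : ℝ) := by rw [← hXYZ]; ring
      calc 7 * ((2 : ℝ) ^ (a n) + 1) ^ 2 * ((b n : ℝ) + 1) ≤ 7 * (2 * X) ^ 2 * (2 * Y) := hstep
        _ = 56 * (X * X * Y) := by ring
        _ ≤ (n : ℝ) / 4 := by nlinarith
    -- convert to naturals
    have hnat4 : n ≤ 4 * (n / 2) := by omega
    have hcast : ((7 * (2 ^ a n + 1) ^ 2 * (b n + 1) : ℕ) : ℝ) ≤ (((n / 2 : ℕ)) : ℝ) := by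
      push_cast
      have h42 : (n : ℝ) / 4 ≤ ((n / 2 : ℕ) : ℝ) := by
        have : (n : ℝ) ≤ 4 * ((n / 2 : ℕ) : ℝ) := by exact_mod_cast hnat4
        linarith
      exact le_trans hfin h42
    exact_mod_cast hcast
  filter_upwards [hev] with n hn
  exact MajHard.bapo_majority_core (a n) (b n) n hn
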